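/- Consider a reversible reaction graph on c vertices (finite edge set E, maps t, h : E → Fin c with t e ≠ h e, positive constants k⁺, k⁻ : E → ℝ, and Laplacian L as below). Let ρ : Fin c → ℝ be strictly positive with the kernel of v ↦ L *ᵥ v equal to the span of ρ. If there exists x : Fin c → ℝ such that Real.log (k⁺ e / k⁻ e) = x (h e) − x (t e) for every edge e (formal balancing), then the matrix L * Matrix.diagonal ρ is symmetric. (Implication (3) ⟹ (1) of Theorem 2.) -/
import Mathlib


open Matrix

/-- The weighted Laplacian matrix of a reversible reaction graph on `c` vertices,
with edge set `E`, tail and head maps `t, h`, and forward and reverse reaction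
constants `kp, km`. -/
def reactionLaplacian (c : ℕ) {E : Type*} [Fintype E]
    (t h : E → Fin c) (kp km : E → ℝ) : Matrix (Fin c) (Fin c) ℝ :=
  fun i j =>
    if i = j then
      (∑ e ∈ Finset.univ.filter (fun e => t e = j), kp e) +
        (∑ e ∈ Finset.univ.filter (fun e => h e = j), km e)
    else
      -((∑ e ∈ Finset.univ.filter (fun e => t e = j ∧ h e = i), kp e) +
        (∑ e ∈ Finset.univ.filter (fun e => t e = i ∧ h e = j), km e))

private lemma sum_fiber_aux {c : ℕ} {E : Type*} [Fintype E] (g : E → Fin c)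
    (p : E → Prop) [DecidablePred p] (f : E → ℝ) :
    ∑ j, ∑ e ∈ Finset.univ.filter (fun e => g e = j ∧ p e), f e
      = ∑ e ∈ Finset.univ.filter (fun e => p e), f e := by
  rw [← Finset.sum_fiberwise (Finset.univ.filter (fun e => p e)) g f]
  refine Finset.sum_congr rfl fun j _ => ?_
  congr 1
  rw [Finset.filter_filter]
  ext e
  simp [and_comm]

theorem formally_balanced_implies_symmetric
    (c : ℕ) (hc : 0 < c) (E : Type*) [Fintype E]
    (t h : E → Fin c) (hth : ∀ e, t e ≠ h e)
    (kp km : E → ℝ) (hkp : ∀ e, 0 < kp e) (hkm : ∀ e, 0 < km e)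
    (ρ : Fin c → ℝ) (hρ : ∀ i, 0 < ρ i)
    (hker : LinearMap.ker (reactionLaplacian c t h kp km).mulVecLin =
      Submodule.span ℝ {ρ})
    (hfb : ∃ x : Fin c → ℝ, ∀ e, Real.log (kp e / km e) = x (h e) - x (t e)) :
    (reactionLaplacian c t h kp km * Matrix.diagonal ρ).IsSymm := by
  obtain ⟨x, hx⟩ := hfb
  set L := reactionLaplacian c t h kp km with hL
  set π : Fin c → ℝ := fun i => Real.exp (x i) with hπ
  have hπpos : ∀ i, 0 < π i := fun i => Real.exp_pos _
  -- detailed balance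
  have db : ∀ e, kp e * π (t e) = km e * π (h e) := by
    intro e
    have h1 := congrArg Real.exp (hx e)
    rw [Real.exp_log (div_pos (hkp e) (hkm e)), Real.exp_sub] at h1
    have hkm' := (hkm e).ne'
    have het := (Real.exp_pos (x (t e))).ne'
    field_simp [hπ] at h1 ⊢
    linarith [h1]
  -- symmetry of L * diagonal π
  have hsym : (L * Matrix.diagonal π).IsSymm := by
    rw [Matrix.IsSymm]
    ext i j
    simp only [Matrix.transpose_apply, Matrix.mul_diagonal]
    by_cases hij : j = i
    · subst hij; rfl
    · have hji : ¬ i = j := fun hh => hij hh.symm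
      rw [hL]
      simp only [reactionLaplacian, if_neg hij, if_neg hji]
      have e1 : ∑ e ∈ Finset.univ.filter (fun e => t e = i ∧ h e = j), kp e * π i
          = ∑ e ∈ Finset.univ.filter (fun e => t e = i ∧ h e = j), km e * π j := by
        refine Finset.sum_congr rfl fun e he => ?_
        obtain ⟨h1, h2⟩ := (Finset.mem_filter.mp he).2
        rw [← h1, ← h2]; exact db e
      have e2 : ∑ e ∈ Finset.univ.filter (fun e => t e = j ∧ h e = i), km e * π i
          = ∑ e ∈ Finset.univ.filter (fun e => t e = j ∧ h e = i), kp e * π j := by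
        refine Finset.sum_congr rfl fun e he => ?_
        obtain ⟨h1, h2⟩ := (Finset.mem_filter.mp he).2
        rw [← h1, ← h2]; exact (db e).symm
      rw [neg_mul, neg_mul, add_mul, add_mul, Finset.sum_mul, Finset.sum_mul,
        Finset.sum_mul, Finset.sum_mul]
      rw [e1, e2]
      ring
  -- π is in the kernel of L
  have hker0 : L.mulVec π = 0 := by
    funext i
    show ∑ j, L i j * π j = 0
    have sumA : ∑ j, (∑ e ∈ Finset.univ.filter (fun e => t e = j ∧ h e = i), kp e) * π j
        = (∑ e ∈ Finset.univ.filter (fun e => h e = i), km e) * π i := by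
      calc ∑ j, (∑ e ∈ Finset.univ.filter (fun e => t e = j ∧ h e = i), kp e) * π j
          = ∑ j, ∑ e ∈ Finset.univ.filter (fun e => t e = j ∧ h e = i),
              kp e * π (t e) := by
            refine Finset.sum_congr rfl fun j _ => ?_
            rw [Finset.sum_mul]
            exact Finset.sum_congr rfl fun e he => by
              rw [(Finset.mem_filter.mp he).2.1]
        _ = ∑ e ∈ Finset.univ.filter (fun e => h e = i), kp e * π (t e) :=
            sum_fiber_aux t _ _
        _ = ∑ e ∈ Finset.univ.filter (fun e => h e = i), km e * π i := by
            refine Finset.sum_congr rfl fun e he => ?_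
            rw [db e, (Finset.mem_filter.mp he).2]
        _ = (∑ e ∈ Finset.univ.filter (fun e => h e = i), km e) * π i :=
            (Finset.sum_mul _ _ _).symm
    have sumB : ∑ j, (∑ e ∈ Finset.univ.filter (fun e => t e = i ∧ h e = j), km e) * π j
        = (∑ e ∈ Finset.univ.filter (fun e => t e = i), kp e) * π i := by
      have hf : ∀ j : Fin c, Finset.univ.filter (fun e : E => t e = i ∧ h e = j)
          = Finset.univ.filter (fun e => h e = j ∧ t e = i) := by
        intro j; ext e; simp [and_comm]
      calc ∑ j, (∑ e ∈ Finset.univ.filter (fun e => t e = i ∧ h e = j), km e) * π j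
          = ∑ j, ∑ e ∈ Finset.univ.filter (fun e => h e = j ∧ t e = i),
              km e * π (h e) := by
            refine Finset.sum_congr rfl fun j _ => ?_
            rw [hf j, Finset.sum_mul]
            exact Finset.sum_congr rfl fun e he => by
              rw [(Finset.mem_filter.mp he).2.1]
        _ = ∑ e ∈ Finset.univ.filter (fun e => t e = i), km e * π (h e) :=
            sum_fiber_aux h _ _
        _ = ∑ e ∈ Finset.univ.filter (fun e => t e = i), kp e * π i := by
            refine Finset.sum_congr rfl fun e he => ?_
            rw [← db e, (Finset.mem_filter.mp he).2]
        _ = (∑ e ∈ Finset.univ.filter (fun e => t e = i), kp e) * π i :=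
            (Finset.sum_mul _ _ _).symm
    have hsplit : ∑ j, L i j * π j
        = L i i * π i + ∑ j ∈ Finset.univ.erase i, L i j * π j :=
      (Finset.add_sum_erase _ _ (Finset.mem_univ i)).symm
    have hdiag : L i i * π i
        = ((∑ e ∈ Finset.univ.filter (fun e => t e = i), kp e) +
            (∑ e ∈ Finset.univ.filter (fun e => h e = i), km e)) * π i := by
      rw [hL]; simp [reactionLaplacian]
    have hoff : ∑ j ∈ Finset.univ.erase i, L i j * π j
        = -(((∑ e ∈ Finset.univ.filter (fun e => h e = i), km e) * π i) +
            ((∑ e ∈ Finset.univ.filter (fun e => t e = i), kp e) * π i)) := by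
      have step1 : ∑ j ∈ Finset.univ.erase i, L i j * π j
          = ∑ j ∈ Finset.univ.erase i,
              (-((∑ e ∈ Finset.univ.filter (fun e => t e = j ∧ h e = i), kp e) * π j)
                + -((∑ e ∈ Finset.univ.filter (fun e => t e = i ∧ h e = j), km e) * π j)) := by
        refine Finset.sum_congr rfl fun j hj => ?_
        have hne : ¬ i = j := fun hh => (Finset.mem_erase.mp hj).1 hh.symm
        rw [hL]
        simp only [reactionLaplacian, if_neg hne]
        ring
      have hzero :
          (-((∑ e ∈ Finset.univ.filter (fun e => t e = i ∧ h e = i), kp e) * π i)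
            + -((∑ e ∈ Finset.univ.filter (fun e => t e = i ∧ h e = i), km e) * π i)) = 0 := by
        have hempty : Finset.univ.filter (fun e : E => t e = i ∧ h e = i) = ∅ := by
          ext e
          simp only [Finset.mem_filter, Finset.mem_univ, true_and, Finset.notMem_empty,
            iff_false]
          rintro ⟨h1, h2⟩
          exact hth e (h1.trans h2.symm)
        rw [hempty]
        simp
      rw [step1, Finset.sum_erase (f := fun j =>
          (-((∑ e ∈ Finset.univ.filter (fun e => t e = j ∧ h e = i), kp e) * π j)
            + -((∑ e ∈ Finset.univ.filter (fun e => t e = i ∧ h e = j), km e) * π j)))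
          Finset.univ hzero, Finset.sum_add_distrib]
      rw [Finset.sum_neg_distrib, Finset.sum_neg_distrib, sumA, sumB]
      ring
    rw [hsplit, hdiag, hoff]
    ring
  -- conclude: π = λ • ρ with λ ≠ 0
  have hmem : π ∈ LinearMap.ker L.mulVecLin := by
    rw [LinearMap.mem_ker, Matrix.mulVecLin_apply, hker0]
  rw [hker] at hmem
  obtain ⟨lam, hlam⟩ := Submodule.mem_span_singleton.mp hmem
  have hlam0 : lam ≠ 0 := by
    intro hl
    have := congrFun hlam ⟨0, hc⟩
    rw [hl] at this
    simp at this
    exact absurd this.symm (ne_of_gt (hπpos ⟨0, hc⟩))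
  have hdiageq : Matrix.diagonal π = lam • Matrix.diagonal ρ := by
    rw [← hlam, ← Matrix.diagonal_smul]
  have : L * Matrix.diagonal π = lam • (L * Matrix.diagonal ρ) := by
    rw [hdiageq, Matrix.mul_smul]
  rw [this] at hsym
  rw [Matrix.IsSymm] at hsym ⊢
  rw [Matrix.transpose_smul] at hsym
  exact smul_right_injective _ hlam0 hsym
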